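/- Let G be a finite undirected graph with n vertices in which every vertex has positive degree, and let H be its double cover. Let α ∈ (0,1], let s and r be nonnegative vectors on V_H such that apr_H(α, s, r) is entrywise nonnegative, and set p = σ∘apr_H(α, s, r). Then for every j with 1 ≤ j ≤ 2n − 1, it holds that p[vol(S_j^p)] ≤ α·(s[vol(S_j^p)] + r[vol(S_j^p)]) + (1 − α)·(1/2)·( p[vol(S_j^p) − |∂(S_j^p)|] + p[vol(S_j^p) + |∂(S_j^p)|] ), where q[·] denotes the Lovász–Simonovits curve of the vector q on H. -/

import Mathlib

open Finset

namespace Paper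

variable {V : Type*} [Fintype V] [DecidableEq V]

/-- The degree of a vertex `v` in the graph `G`. -/
noncomputable def deg (G : SimpleGraph V) (v : V) : ℕ := {u | G.Adj v u}.ncard

/-- The volume of a set of vertices: the sum of the degrees of its members. -/
noncomputable def vol (G : SimpleGraph V) (S : Finset V) : ℕ := ∑ v ∈ S, deg G v

/-- The number of ordered pairs `(u,v)` with `u ∈ S`, `v ∈ T` and `{u,v} ∈ E(G)`.
For disjoint `S`, `T` this is the number of edges between `S` and `T`, and
`cutEdges G S Sᶜ = |∂(S)|`. -/
noncomputable def cutEdges (G : SimpleGraph V) (S T : Finset V) : ℕ :=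
  {e : V × V | e.1 ∈ S ∧ e.2 ∈ T ∧ G.Adj e.1 e.2}.ncard

/-- The conductance `Φ(S) = |∂(S)| / min(vol(S), vol(V \ S))`. -/
noncomputable def conductance (G : SimpleGraph V) (S : Finset V) : ℝ :=
  (cutEdges G S Sᶜ : ℝ) / min (vol G S : ℝ) (vol G Sᶜ : ℝ)

/-- The bipartiteness ratio `β(L,R) = 1 - 2 e(L,R) / vol(L ∪ R)`. -/
noncomputable def bipartiteness (G : SimpleGraph V) (L R : Finset V) : ℝ :=
  1 - 2 * (cutEdges G L R : ℝ) / (vol G (L ∪ R) : ℝ)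

/-- The double cover of `G`: on vertex set `V ⊕ V` (with `Sum.inl v = v₁` and
`Sum.inr v = v₂`), for every edge `{u,v}` of `G` there are edges `{u₁,v₂}` and `{u₂,v₁}`. -/
def doubleCover (G : SimpleGraph V) : SimpleGraph (V ⊕ V) :=
  SimpleGraph.fromRel (fun x y => ∃ u v, x = Sum.inl u ∧ y = Sum.inr v ∧ G.Adj u v)

open scoped Classical in
/-- One step of the lazy random walk `W = (1/2)(I + D⁻¹A)`, acting on row vectors:
`p ↦ pW`, so `(lazyWalk G p) x = (1/2) p(x) + (1/2) ∑_{y ~ x} p(y)/deg(y)`. -/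
noncomputable def lazyWalk (G : SimpleGraph V) (p : V → ℝ) : V → ℝ :=
  fun x => (1/2) * p x + (1/2) * ∑ y, (if G.Adj y x then p y / (deg G y : ℝ) else 0)

/-- The simplify operator `σ` on vectors indexed by the double cover:
`(σ∘p)(u₁) = max(0, p(u₁) - p(u₂))` and `(σ∘p)(u₂) = max(0, p(u₂) - p(u₁))`. -/
noncomputable def simplify (p : V ⊕ V → ℝ) : V ⊕ V → ℝ :=
  Sum.elim (fun u => max 0 (p (Sum.inl u) - p (Sum.inr u)))
           (fun u => max 0 (p (Sum.inr u) - p (Sum.inl u)))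

/-- `q` is the personalised Pagerank vector `pr(α, s)`, i.e. it satisfies
`q = α s + (1-α) q W`. -/
def IsPagerank (G : SimpleGraph V) (α : ℝ) (s q : V → ℝ) : Prop :=
  ∀ x, q x = α * s x + (1 - α) * lazyWalk G q x

/-- `p` is an approximate Pagerank vector `apr(α, s, r)` with residual `r`, i.e.
`p + pr(α, r) = pr(α, s)`. -/
def IsApr (G : SimpleGraph V) (α : ℝ) (s r p : V → ℝ) : Prop :=
  ∃ qs qr, IsPagerank G α s qs ∧ IsPagerank G α r qr ∧ ∀ x, p x + qr x = qs x

/-- Given an ordering `ord` of the vertices, the sweep set `S_j` consists of the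
first `j` vertices in this ordering. -/
def sweepSet {W : Type*} [Fintype W] (ord : Fin (Fintype.card W) ≃ W) (j : ℕ) :
    Finset W :=
  Finset.univ.filter fun x => (ord.symm x : ℕ) < j

/-- The size of the support `supp(p) = {u : p(u) ≠ 0}` of a vector. -/
noncomputable def suppCard {W : Type*} (p : W → ℝ) : ℕ := {x | p x ≠ 0}.ncard

/-- The Lovász–Simonovits curve of a vector `p`:
`p[x] = max { ∑_u w(u) p(u) : w ∈ [0,1]^V, ∑_u w(u) deg(u) = x }`. -/
noncomputable def lsCurve (G : SimpleGraph V) (p : V → ℝ) (x : ℝ) : ℝ :=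
  sSup {y | ∃ w : V → ℝ, (∀ u, 0 ≤ w u ∧ w u ≤ 1) ∧
    (∑ u, w u * (deg G u : ℝ)) = x ∧ y = ∑ u, w u * p u}

/-! ### Directed graphs -/

/-- Out-degree of `u` in the digraph with edge relation `E`. -/
noncomputable def degOut (E : V → V → Prop) (u : V) : ℕ := {v | E u v}.ncard

/-- In-degree of `u` in the digraph with edge relation `E`. -/
noncomputable def degIn (E : V → V → Prop) (u : V) : ℕ := {v | E v u}.ncard

/-- Out-volume `vol_out(S) = ∑_{u ∈ S} deg_out(u)`. -/
noncomputable def volOut (E : V → V → Prop) (S : Finset V) : ℕ := ∑ u ∈ S, degOut E u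

/-- In-volume `vol_in(S) = ∑_{u ∈ S} deg_in(u)`. -/
noncomputable def volIn (E : V → V → Prop) (S : Finset V) : ℕ := ∑ u ∈ S, degIn E u

/-- The number of directed edges from `L` to `R`. -/
noncomputable def eDir (E : V → V → Prop) (L R : Finset V) : ℕ :=
  {e : V × V | e.1 ∈ L ∧ e.2 ∈ R ∧ E e.1 e.2}.ncard

/-- The total number of directed edges of the digraph. -/
noncomputable def numEdges (E : V → V → Prop) : ℕ := {e : V × V | E e.1 e.2}.ncard

/-- The flow ratio `F(L,R) = 1 - 2 e(L,R) / (vol_out(L) + vol_in(R))`. -/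
noncomputable def flowRatio (E : V → V → Prop) (L R : Finset V) : ℝ :=
  1 - 2 * (eDir E L R : ℝ) / ((volOut E L : ℝ) + (volIn E R : ℝ))

/-- The semi-double cover of a digraph: on vertex set `V ⊕ V` (with `Sum.inl v = v₁`,
`Sum.inr v = v₂`), for every directed edge `(u,v)` there is an undirected edge `{u₁, v₂}`. -/
def semiDoubleCover (E : V → V → Prop) : SimpleGraph (V ⊕ V) :=
  SimpleGraph.fromRel (fun x y => ∃ u v, x = Sum.inl u ∧ y = Sum.inr v ∧ E u v)

/-! ### The evolving set process -/

/-- `χ_v W χ_S^T`: the probability that one step of the lazy random walk started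
at `v` ends in `S`. -/
noncomputable def walkToSet (H : SimpleGraph V) (S : Finset V) (v : V) : ℝ :=
  (1/2) * (if v ∈ S then (1:ℝ) else 0)
    + (1/2) * (({y | H.Adj v y ∧ y ∈ S}.ncard : ℝ) / (deg H v : ℝ))

/-- The transition kernel `K(S, S')` of the evolving set process: the probability,
over a uniformly random threshold `t ∈ [0,1]`, that `{v : χ_v W χ_S^T ≥ t} = S'`. -/
noncomputable def espKernel (H : SimpleGraph V) (S S' : Finset V) : ℝ :=
  (MeasureTheory.volume {t : ℝ | t ∈ Set.Icc (0:ℝ) 1 ∧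
    {v | t ≤ walkToSet H S v} = (S' : Set V)}).toReal

/-- The transition kernel `K̂(S,S') = (vol(S')/vol(S)) K(S,S')` of the volume-biased
evolving set process. -/
noncomputable def vbKernel (H : SimpleGraph V) (S S' : Finset V) : ℝ :=
  ((vol H S' : ℝ) / (vol H S : ℝ)) * espKernel H S S'

open scoped Classical in
/-- The probability that a sample path `(S₀, …, S_T)` of the volume-biased evolving
set process started from `S₀ = {x}` satisfies the property `P`. -/
noncomputable def pathProb (H : SimpleGraph V) (T : ℕ) (x : V)
    (P : (Fin (T+1) → Finset V) → Prop) : ℝ :=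
  ∑ f ∈ Finset.univ.filter (fun f : Fin (T+1) → Finset V => f 0 = {x} ∧ P f),
    ∏ i : Fin T, vbKernel H (f i.castSucc) (f i.succ)



section Aux
set_option linter.unusedSectionVars false
set_option maxHeartbeats 1600000
open scoped Classical

lemma deg_eq_card (G : SimpleGraph V) (v : V) :
    deg G v = (univ.filter (G.Adj v)).card := by
  rw [deg, Set.ncard_eq_toFinset_card']
  congr 1
  ext u; simp

lemma cutEdges_eq_sum (G : SimpleGraph V) (S T : Finset V) :
    cutEdges G S T = ∑ y ∈ S, (T.filter (G.Adj y)).card := by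
  rw [cutEdges, Set.ncard_eq_toFinset_card']
  have h1 : {e : V × V | e.1 ∈ S ∧ e.2 ∈ T ∧ G.Adj e.1 e.2}.toFinset
      = (S ×ˢ T).filter (fun e => G.Adj e.1 e.2) := by
    ext e; simp [Finset.mem_product, and_assoc]
  rw [h1]
  rw [Finset.card_eq_sum_card_fiberwise (f := Prod.fst) (t := S)
    (fun e he => by simp at he; exact he.1.1)]
  refine Finset.sum_congr rfl fun y hy => ?_
  refine Finset.card_bij' (fun e _ => e.2) (fun x _ => (y, x)) ?_ ?_ ?_ ?_
  · intro e he; simp at he ⊢; obtain ⟨⟨⟨h1,h2⟩,h3⟩,h4⟩ := he; subst h4; exact ⟨h2, h3⟩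
  · intro x hx; simp at hx ⊢; exact ⟨⟨hy, hx.1⟩, hx.2⟩
  · intro e he; simp at he; simp [← he.2]
  · intro x hx; simp

lemma cutEdges_symm (G : SimpleGraph V) (S T : Finset V) :
    cutEdges G S T = cutEdges G T S := by
  rw [cutEdges, cutEdges]
  have : {e : V × V | e.1 ∈ S ∧ e.2 ∈ T ∧ G.Adj e.1 e.2}
      = Prod.swap '' {e : V × V | e.1 ∈ T ∧ e.2 ∈ S ∧ G.Adj e.1 e.2} := by
    ext ⟨a, b⟩
    simp only [Set.mem_setOf_eq, Set.mem_image, Prod.exists, Prod.swap_prod_mk,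
      Prod.mk.injEq]
    constructor
    · rintro ⟨h1, h2, h3⟩; exact ⟨b, a, ⟨h2, h1, h3.symm⟩, rfl, rfl⟩
    · rintro ⟨c, d, ⟨h1, h2, h3⟩, rfl, rfl⟩; exact ⟨h2, h1, h3.symm⟩
  rw [this, Set.ncard_image_of_injective _ Prod.swap_injective]

lemma deg_split (G : SimpleGraph V) (S : Finset V) (y : V) :
    deg G y = (S.filter (G.Adj y)).card + (Sᶜ.filter (G.Adj y)).card := by
  rw [deg_eq_card]
  rw [← Finset.card_union_of_disjoint (by
    apply Finset.disjoint_filter_filter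
    simp [Finset.disjoint_left])]
  congr 1
  ext u; by_cases h : u ∈ S <;> simp [h]

lemma vol_eq_inner_add_cut (G : SimpleGraph V) (S : Finset V) :
    vol G S = (∑ y ∈ S, (S.filter (G.Adj y)).card) + cutEdges G S Sᶜ := by
  rw [vol, cutEdges_eq_sum, ← Finset.sum_add_distrib]
  exact Finset.sum_congr rfl fun y _ => deg_split G S y

lemma le_lsCurve (G : SimpleGraph V) {q : V → ℝ} (hq : ∀ u, 0 ≤ q u)
    {w : V → ℝ} (hw : ∀ u, 0 ≤ w u ∧ w u ≤ 1) {x : ℝ}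
    (hx : (∑ u, w u * (deg G u : ℝ)) = x) :
    ∑ u, w u * q u ≤ lsCurve G q x := by
  apply le_csSup
  · refine ⟨∑ u, q u, ?_⟩
    rintro y ⟨w', hw', -, rfl⟩
    exact Finset.sum_le_sum fun u _ => by
      nlinarith [(hw' u).1, (hw' u).2, hq u]
  · exact ⟨w, hw, hx, rfl⟩

lemma lsCurve_le (G : SimpleGraph V) {q : V → ℝ} {x c : ℝ} (hc : 0 ≤ c)
    (h : ∀ w : V → ℝ, (∀ u, 0 ≤ w u ∧ w u ≤ 1) →
      (∑ u, w u * (deg G u : ℝ)) = x → ∑ u, w u * q u ≤ c) :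
    lsCurve G q x ≤ c := by
  apply Real.sSup_le _ hc
  rintro y ⟨w, hw, hx, rfl⟩
  exact h w hw hx

@[simp] lemma doubleCover_adj_inl_inr (G : SimpleGraph V) (u v : V) :
    (doubleCover G).Adj (Sum.inl u) (Sum.inr v) ↔ G.Adj u v := by
  simp [doubleCover]

@[simp] lemma doubleCover_adj_inr_inl (G : SimpleGraph V) (u v : V) :
    (doubleCover G).Adj (Sum.inr u) (Sum.inl v) ↔ G.Adj u v := by
  rw [SimpleGraph.adj_comm, doubleCover_adj_inl_inr, G.adj_comm]

@[simp] lemma doubleCover_adj_inl_inl (G : SimpleGraph V) (u v : V) :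
    ¬ (doubleCover G).Adj (Sum.inl u) (Sum.inl v) := by
  simp [doubleCover]

@[simp] lemma doubleCover_adj_inr_inr (G : SimpleGraph V) (u v : V) :
    ¬ (doubleCover G).Adj (Sum.inr u) (Sum.inr v) := by
  simp [doubleCover]

lemma doubleCover_adj_swap (G : SimpleGraph V) (a b : V ⊕ V) :
    (doubleCover G).Adj a.swap b.swap ↔ (doubleCover G).Adj a b := by
  cases a <;> cases b <;> simp [Sum.swap, G.adj_comm]

lemma deg_doubleCover_inl (G : SimpleGraph V) (u : V) :
    deg (doubleCover G) (Sum.inl u) = deg G u := by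
  rw [deg, deg]
  have : {y | (doubleCover G).Adj (Sum.inl u) y} = Sum.inr '' {v | G.Adj u v} := by
    ext y; cases y <;> simp
  rw [this, Set.ncard_image_of_injective _ Sum.inr_injective]

lemma deg_doubleCover_inr (G : SimpleGraph V) (u : V) :
    deg (doubleCover G) (Sum.inr u) = deg G u := by
  rw [deg, deg]
  have : {y | (doubleCover G).Adj (Sum.inr u) y} = Sum.inl '' {v | G.Adj u v} := by
    ext y; cases y <;> simp
  rw [this, Set.ncard_image_of_injective _ Sum.inl_injective]

lemma deg_doubleCover_swap (G : SimpleGraph V) (x : V ⊕ V) :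
    deg (doubleCover G) x.swap = deg (doubleCover G) x := by
  cases x <;> simp [Sum.swap, deg_doubleCover_inl, deg_doubleCover_inr]

lemma simplify_eq_max (p : V ⊕ V → ℝ) (x : V ⊕ V) :
    simplify p x = max 0 (p x - p x.swap) := by
  cases x <;> rfl

lemma simplify_nonneg (p : V ⊕ V → ℝ) (x : V ⊕ V) : 0 ≤ simplify p x := by
  rw [simplify_eq_max]; exact le_max_left _ _

lemma lazyWalk_nonneg (G : SimpleGraph V) {p : V → ℝ} (hp : ∀ x, 0 ≤ p x) (x : V) :
    0 ≤ lazyWalk G p x := by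
  rw [lazyWalk]
  have : (0:ℝ) ≤ ∑ y, (if G.Adj y x then p y / (deg G y : ℝ) else 0) := by
    apply Finset.sum_nonneg
    intro y _
    split_ifs
    · exact div_nonneg (hp y) (Nat.cast_nonneg _)
    · exact le_rfl
  have := hp x
  linarith

lemma apr_eq (G : SimpleGraph V) {α : ℝ} {s r p' : V → ℝ}
    (happr : IsApr G α s r p') (x : V) :
    p' x = α * (s x - r x) + (1 - α) * lazyWalk G p' x := by
  obtain ⟨qs, qr, hqs, hqr, hsum⟩ := happr
  have hp : ∀ y, p' y = qs y - qr y := fun y => by linarith [hsum y]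
  have hw : lazyWalk G p' x = lazyWalk G qs x - lazyWalk G qr x := by
    simp only [lazyWalk]
    have h2 : ∀ y, (if G.Adj y x then p' y / (deg G y : ℝ) else 0)
        = (if G.Adj y x then qs y / (deg G y : ℝ) else 0)
          - (if G.Adj y x then qr y / (deg G y : ℝ) else 0) := by
      intro y
      split_ifs
      · rw [hp y, sub_div]
      · ring
    rw [Finset.sum_congr rfl (fun y _ => h2 y), Finset.sum_sub_distrib, hp x]
    ring
  rw [hp x, hqs x, hqr x, hw]
  ring

lemma lazyWalk_swap_diff (G : SimpleGraph V) (hdeg : ∀ v, 0 < deg (doubleCover G) v)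
    (p' : V ⊕ V → ℝ) (x : V ⊕ V) :
    lazyWalk (doubleCover G) p' x - lazyWalk (doubleCover G) p' x.swap
      ≤ lazyWalk (doubleCover G) (simplify p') x := by
  have hre : ∑ y, (if (doubleCover G).Adj y x.swap then p' y / (deg (doubleCover G) y : ℝ) else 0)
      = ∑ y, (if (doubleCover G).Adj y x then p' y.swap / (deg (doubleCover G) y : ℝ) else 0) := by
    refine (Fintype.sum_equiv (Equiv.sumComm V V)
      (fun y => if (doubleCover G).Adj y x then p' y.swap / (deg (doubleCover G) y : ℝ) else 0)
      (fun y => if (doubleCover G).Adj y x.swap then p' y / (deg (doubleCover G) y : ℝ) else 0) ?_).symm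
    intro y
    simp only [Equiv.sumComm_apply, deg_doubleCover_swap, doubleCover_adj_swap]
  · simp only [lazyWalk, hre]
    have key : ∑ y, ((if (doubleCover G).Adj y x then p' y / (deg (doubleCover G) y : ℝ) else 0)
          - (if (doubleCover G).Adj y x then p' y.swap / (deg (doubleCover G) y : ℝ) else 0))
        ≤ ∑ y, (if (doubleCover G).Adj y x then simplify p' y / (deg (doubleCover G) y : ℝ) else 0) := by
      apply Finset.sum_le_sum
      intro y _
      split_ifs with h
      · rw [← sub_div]
        have hd : (0:ℝ) < (deg (doubleCover G) y : ℝ) := by exact_mod_cast hdeg y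
        have hm : p' y - p' y.swap ≤ simplify p' y := by
          rw [simplify_eq_max]; exact le_max_right _ _
        gcongr
      · simp
    rw [Finset.sum_sub_distrib] at key
    have hx : p' x - p' x.swap ≤ simplify p' x := by
      rw [simplify_eq_max]; exact le_max_right _ _
    linarith

lemma pointwise_bound (G : SimpleGraph V) (hdegH : ∀ v, 0 < deg (doubleCover G) v)
    {α : ℝ} {s r p' : V ⊕ V → ℝ} (hα0 : 0 ≤ α) (hα1 : α ≤ 1)
    (hs : ∀ x, 0 ≤ s x) (hr : ∀ x, 0 ≤ r x)
    (happr : IsApr (doubleCover G) α s r p') (x : V ⊕ V) :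
    simplify p' x ≤ α * (s x + r x.swap)
      + (1 - α) * lazyWalk (doubleCover G) (simplify p') x := by
  have hwalknn := lazyWalk_nonneg (doubleCover G) (simplify_nonneg p') x
  rcases le_or_gt (p' x - p' x.swap) 0 with h | h
  · rw [simplify_eq_max, max_eq_left h]
    have h0 : 0 ≤ α * (s x + r x.swap) := mul_nonneg hα0 (add_nonneg (hs x) (hr _))
    nlinarith [mul_nonneg (by linarith : (0:ℝ) ≤ 1 - α) hwalknn]
  · rw [simplify_eq_max, max_eq_right h.le]
    have h1 := apr_eq _ happr x
    have h2 := apr_eq _ happr x.swap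
    have h3 := lazyWalk_swap_diff G hdegH p' x
    have h4 := mul_le_mul_of_nonneg_left h3 (by linarith : (0:ℝ) ≤ 1 - α)
    have h5 : 0 ≤ α * s x.swap := mul_nonneg hα0 (hs _)
    have h6 : 0 ≤ α * r x := mul_nonneg hα0 (hr _)
    nlinarith [h1, h2, h4, h5, h6]

lemma sum_indicator_mul (S : Finset V) (f : V → ℝ) :
    ∑ u, (if u ∈ S then (1:ℝ) else 0) * f u = ∑ u ∈ S, f u := by
  have h : ∀ u, (if u ∈ S then (1:ℝ) else 0) * f u = if u ∈ S then f u else 0 :=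
    fun u => by split_ifs <;> simp
  rw [Finset.sum_congr rfl fun u _ => h u, Finset.sum_ite_mem, Finset.univ_inter]


lemma sum_indicator_deg (G : SimpleGraph V) (S : Finset V) :
    ∑ u, (if u ∈ S then (1:ℝ) else 0) * (deg G u : ℝ) = (vol G S : ℝ) := by
  rw [sum_indicator_mul, vol]
  push_cast
  rfl

end Aux

open scoped Classical

/-- Let `G` be a graph on `n` vertices with positive degrees
everywhere and double cover `H`. Let `α ∈ (0,1]`, `s, r` nonnegative with
`apr_H(α,s,r)` entrywise nonnegative, and `p = σ∘apr_H(α,s,r)`. For every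
`1 ≤ j ≤ 2n - 1`:
`p[vol(S_j^p)] ≤ α(s[vol(S_j^p)] + r[vol(S_j^p)])
  + (1-α)(1/2)(p[vol(S_j^p) - |∂(S_j^p)|] + p[vol(S_j^p) + |∂(S_j^p)|])`. -/
theorem statement12 (G : SimpleGraph V) (hdeg : ∀ v, 0 < deg G v)
    (α : ℝ) (hα0 : 0 < α) (hα1 : α ≤ 1)
    (s r p' : V ⊕ V → ℝ) (hs : ∀ x, 0 ≤ s x) (hr : ∀ x, 0 ≤ r x)
    (happr : IsApr (doubleCover G) α s r p') (hp' : ∀ x, 0 ≤ p' x)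
    (ord : Fin (Fintype.card (V ⊕ V)) ≃ (V ⊕ V))
    (hord : ∀ i j, i ≤ j →
      simplify p' (ord j) / (deg (doubleCover G) (ord j) : ℝ)
        ≤ simplify p' (ord i) / (deg (doubleCover G) (ord i) : ℝ))
    (j : ℕ) (hj1 : 1 ≤ j) (hj2 : j ≤ 2 * Fintype.card V - 1) :
    lsCurve (doubleCover G) (simplify p')
        (vol (doubleCover G) (sweepSet ord j) : ℝ)
      ≤ α * (lsCurve (doubleCover G) s (vol (doubleCover G) (sweepSet ord j) : ℝ)
              + lsCurve (doubleCover G) r (vol (doubleCover G) (sweepSet ord j) : ℝ))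
        + (1 - α) * (1/2) *
          (lsCurve (doubleCover G) (simplify p')
              ((vol (doubleCover G) (sweepSet ord j) : ℝ)
                - (cutEdges (doubleCover G) (sweepSet ord j) (sweepSet ord j)ᶜ : ℝ))
            + lsCurve (doubleCover G) (simplify p')
              ((vol (doubleCover G) (sweepSet ord j) : ℝ)
                + (cutEdges (doubleCover G) (sweepSet ord j) (sweepSet ord j)ᶜ : ℝ))) := by
  classical
  have hdegH : ∀ x, 0 < deg (doubleCover G) x := by
    intro x
    cases x with
    | inl u => rw [deg_doubleCover_inl]; exact hdeg u
    | inr u => rw [deg_doubleCover_inr]; exact hdeg u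
  have hdR : ∀ x : V ⊕ V, (0:ℝ) < (deg (doubleCover G) x : ℝ) := fun x => by
    exact_mod_cast hdegH x
  have hpnn : ∀ x, 0 ≤ simplify p' x := simplify_nonneg p'
  set S : Finset (V ⊕ V) := sweepSet ord j with hS
  have hmemS : ∀ x, x ∈ S ↔ ((ord.symm x : ℕ) < j) := by
    intro x; simp [hS, sweepSet]
  have hcard : j - 1 < Fintype.card (V ⊕ V) := by
    rw [Fintype.card_sum]; omega
  set k : Fin (Fintype.card (V ⊕ V)) := ⟨j - 1, hcard⟩ with hk
  set τ : ℝ := simplify p' (ord k) / (deg (doubleCover G) (ord k) : ℝ) with hτ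
  -- Step A : the LS curve at vol(S) is at most the sum of p over S
  have stepA : lsCurve (doubleCover G) (simplify p') (vol (doubleCover G) S : ℝ)
      ≤ ∑ x ∈ S, simplify p' x := by
    apply lsCurve_le _ (Finset.sum_nonneg fun x _ => hpnn x)
    intro w hw hx
    have key : ∀ u : V ⊕ V, (w u - (if u ∈ S then (1:ℝ) else 0)) * simplify p' u
        ≤ (w u - (if u ∈ S then (1:ℝ) else 0)) * (τ * (deg (doubleCover G) u : ℝ)) := by
      intro u
      by_cases hu : u ∈ S
      · have hle : (ord.symm u) ≤ k := by
          rw [Fin.le_def]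
          have := (hmemS u).mp hu
          simp only [hk]
          omega
        have h0 := hord (ord.symm u) k hle
        rw [Equiv.apply_symm_apply] at h0
        rw [← hτ] at h0
        have h2 : τ * (deg (doubleCover G) u : ℝ) ≤ simplify p' u :=
          (le_div_iff₀ (hdR u)).mp h0
        have h1 : w u - 1 ≤ 0 := by linarith [(hw u).2]
        simpa [hu] using mul_le_mul_of_nonpos_left h2 h1
      · have hle : k ≤ (ord.symm u) := by
          rw [Fin.le_def]
          have := (hmemS u).not.mp hu
          simp only [hk]
          omega
        have h0 := hord k (ord.symm u) hle
        rw [Equiv.apply_symm_apply] at h0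
        rw [← hτ] at h0
        have h2 : simplify p' u ≤ τ * (deg (doubleCover G) u : ℝ) :=
          (div_le_iff₀ (hdR u)).mp h0
        have h1 : 0 ≤ w u := (hw u).1
        simpa [hu] using mul_le_mul_of_nonneg_left h2 h1
    have hsum2 := Finset.sum_le_sum fun u (_ : u ∈ (univ : Finset (V ⊕ V))) => key u
    have hA1 : ∑ u, (w u - (if u ∈ S then (1:ℝ) else 0)) * simplify p' u
        = (∑ u, w u * simplify p' u) - ∑ x ∈ S, simplify p' x := by
      rw [← sum_indicator_mul S (simplify p'), ← Finset.sum_sub_distrib]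
      exact Finset.sum_congr rfl fun u _ => by ring
    have hA2 : ∑ u, (w u - (if u ∈ S then (1:ℝ) else 0))
          * (τ * (deg (doubleCover G) u : ℝ)) = 0 := by
      have expand : ∀ u : V ⊕ V, (w u - (if u ∈ S then (1:ℝ) else 0))
            * (τ * (deg (doubleCover G) u : ℝ))
          = τ * (w u * (deg (doubleCover G) u : ℝ))
            - τ * ((if u ∈ S then (1:ℝ) else 0) * (deg (doubleCover G) u : ℝ)) :=
        fun u => by ring
      rw [Finset.sum_congr rfl fun u _ => expand u, Finset.sum_sub_distrib,
        ← Finset.mul_sum, ← Finset.mul_sum, hx, sum_indicator_deg]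
      ring
    rw [hA1, hA2] at hsum2
    linarith
  -- Step B : pointwise bound summed over S
  have stepB : ∑ x ∈ S, simplify p' x
      ≤ α * ((∑ x ∈ S, s x) + (∑ x ∈ S, r x.swap))
        + (1 - α) * ∑ x ∈ S, lazyWalk (doubleCover G) (simplify p') x := by
    have h := Finset.sum_le_sum fun x (_ : x ∈ S) =>
      pointwise_bound G hdegH hα0.le hα1 hs hr happr x
    calc ∑ x ∈ S, simplify p' x
        ≤ ∑ x ∈ S, (α * (s x + r x.swap)
            + (1 - α) * lazyWalk (doubleCover G) (simplify p') x) := h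
      _ = α * ((∑ x ∈ S, s x) + (∑ x ∈ S, r x.swap))
            + (1 - α) * ∑ x ∈ S, lazyWalk (doubleCover G) (simplify p') x := by
          rw [Finset.sum_add_distrib, ← Finset.mul_sum, ← Finset.mul_sum,
            Finset.sum_add_distrib]
  -- Step C(s)
  have hCs : ∑ x ∈ S, s x ≤ lsCurve (doubleCover G) s (vol (doubleCover G) S : ℝ) := by
    have h := le_lsCurve (doubleCover G) hs
      (w := fun u => if u ∈ S then (1:ℝ) else 0)
      (fun u => by split_ifs <;> norm_num) (sum_indicator_deg (doubleCover G) S)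
    rwa [sum_indicator_mul] at h
  -- Step C(r)
  have hswapinj : Function.Injective (Sum.swap : V ⊕ V → V ⊕ V) := fun a b hab => by
    rw [← Sum.swap_swap a, hab, Sum.swap_swap]
  have hCr : ∑ x ∈ S, r x.swap
      ≤ lsCurve (doubleCover G) r (vol (doubleCover G) S : ℝ) := by
    set T : Finset (V ⊕ V) := S.image Sum.swap with hT
    have hsum_r : ∑ x ∈ T, r x = ∑ x ∈ S, r x.swap := by
      rw [hT, Finset.sum_image fun a _ b _ h => hswapinj h]
    have hvolT : ∑ u, (if u ∈ T then (1:ℝ) else 0) * (deg (doubleCover G) u : ℝ)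
        = (vol (doubleCover G) S : ℝ) := by
      rw [sum_indicator_deg]
      have : vol (doubleCover G) T = vol (doubleCover G) S := by
        rw [vol, vol, hT, Finset.sum_image fun a _ b _ h => hswapinj h]
        exact Finset.sum_congr rfl fun x _ => deg_doubleCover_swap G x
      rw [this]
    have h := le_lsCurve (doubleCover G) hr
      (w := fun u => if u ∈ T then (1:ℝ) else 0)
      (fun u => by split_ifs <;> norm_num) hvolT
    rwa [sum_indicator_mul, hsum_r] at h
  -- Step D
  set e : V ⊕ V → ℝ := fun y => ((S.filter ((doubleCover G).Adj y)).card : ℝ) with he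
  have hey : ∀ y, e y ≤ (deg (doubleCover G) y : ℝ) := by
    intro y
    simp only [he, deg_eq_card]
    exact_mod_cast Finset.card_le_card
      (Finset.filter_subset_filter _ (Finset.subset_univ S))
  have heynn : ∀ y, 0 ≤ e y := fun y => by simp only [he]; positivity
  set wm : V ⊕ V → ℝ :=
    fun y => if y ∈ S then e y / (deg (doubleCover G) y : ℝ) else 0 with hwm
  set wp : V ⊕ V → ℝ :=
    fun y => if y ∈ S then 1 else e y / (deg (doubleCover G) y : ℝ) with hwp
  have hwmb : ∀ u, 0 ≤ wm u ∧ wm u ≤ 1 := by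
    intro u
    simp only [hwm]
    split_ifs
    · exact ⟨div_nonneg (heynn u) (hdR u).le, (div_le_one (hdR u)).mpr (hey u)⟩
    · norm_num
  have hwpb : ∀ u, 0 ≤ wp u ∧ wp u ≤ 1 := by
    intro u
    simp only [hwp]
    split_ifs
    · norm_num
    · exact ⟨div_nonneg (heynn u) (hdR u).le, (div_le_one (hdR u)).mpr (hey u)⟩
  have hinner : ∑ y ∈ S, e y
      = (vol (doubleCover G) S : ℝ) - (cutEdges (doubleCover G) S Sᶜ : ℝ) := by
    have h := vol_eq_inner_add_cut (doubleCover G) S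
    have h' : (vol (doubleCover G) S : ℝ)
        = (∑ y ∈ S, e y) + (cutEdges (doubleCover G) S Sᶜ : ℝ) := by
      simp only [he]; exact_mod_cast congrArg (Nat.cast : ℕ → ℝ) h
    linarith
  have houter : ∑ y ∈ Sᶜ, e y = (cutEdges (doubleCover G) S Sᶜ : ℝ) := by
    have h : cutEdges (doubleCover G) Sᶜ S
        = ∑ y ∈ Sᶜ, (S.filter ((doubleCover G).Adj y)).card :=
      cutEdges_eq_sum (doubleCover G) Sᶜ S
    simp only [he]; rw [cutEdges_symm (doubleCover G) S Sᶜ]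
    exact_mod_cast (congrArg (Nat.cast : ℕ → ℝ) h).symm
  have hwmdeg : ∑ u, wm u * (deg (doubleCover G) u : ℝ)
      = (vol (doubleCover G) S : ℝ) - (cutEdges (doubleCover G) S Sᶜ : ℝ) := by
    have expand : ∀ u : V ⊕ V, wm u * (deg (doubleCover G) u : ℝ)
        = if u ∈ S then e u else 0 := by
      intro u
      simp only [hwm]
      split_ifs
      · exact div_mul_cancel₀ _ (hdR u).ne'
      · ring
    rw [Finset.sum_congr rfl fun u _ => expand u, Finset.sum_ite_mem,
      Finset.univ_inter, hinner]
  have hwpdeg : ∑ u, wp u * (deg (doubleCover G) u : ℝ)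
      = (vol (doubleCover G) S : ℝ) + (cutEdges (doubleCover G) S Sᶜ : ℝ) := by
    have expand : ∀ u : V ⊕ V, wp u * (deg (doubleCover G) u : ℝ)
        = if u ∈ S then (deg (doubleCover G) u : ℝ) else e u := by
      intro u
      simp only [hwp]
      split_ifs
      · ring
      · exact div_mul_cancel₀ _ (hdR u).ne'
    rw [Finset.sum_congr rfl fun u _ => expand u, ← Finset.sum_add_sum_compl S]
    have h1 : ∑ u ∈ S, (if u ∈ S then (deg (doubleCover G) u : ℝ) else e u)
        = (vol (doubleCover G) S : ℝ) := by
      rw [Finset.sum_congr rfl fun u hu => if_pos hu, vol]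
      push_cast
      rfl
    have h2 : ∑ u ∈ Sᶜ, (if u ∈ S then (deg (doubleCover G) u : ℝ) else e u)
        = (cutEdges (doubleCover G) S Sᶜ : ℝ) := by
      rw [Finset.sum_congr rfl fun u hu => if_neg (Finset.mem_compl.mp hu), houter]
    rw [h1, h2]
  have hhalf : ∑ x ∈ S, lazyWalk (doubleCover G) (simplify p') x
      = (1/2) * (∑ u, wm u * simplify p' u) + (1/2) * (∑ u, wp u * simplify p' u) := by
    have lhs_eq : ∑ x ∈ S, lazyWalk (doubleCover G) (simplify p') x
        = (1/2) * (∑ x ∈ S, simplify p' x)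
          + (1/2) * ∑ y, e y * (simplify p' y / (deg (doubleCover G) y : ℝ)) := by
      simp only [lazyWalk]
      rw [Finset.sum_add_distrib, ← Finset.mul_sum, ← Finset.mul_sum]
      congr 2
      rw [Finset.sum_comm]
      refine Finset.sum_congr rfl fun y _ => ?_
      rw [← Finset.sum_filter, Finset.sum_const, nsmul_eq_mul]
    have rhs_eq : (1/2) * (∑ u, wm u * simplify p' u)
          + (1/2) * (∑ u, wp u * simplify p' u)
        = (1/2) * (∑ x ∈ S, simplify p' x)
          + (1/2) * ∑ y, e y * (simplify p' y / (deg (doubleCover G) y : ℝ)) := by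
      have expand : ∀ u : V ⊕ V, wm u * simplify p' u + wp u * simplify p' u
          = (if u ∈ S then (1:ℝ) else 0) * simplify p' u
            + e u * (simplify p' u / (deg (doubleCover G) u : ℝ)) := by
        intro u
        simp only [hwm, hwp]
        split_ifs
        · ring
        · ring
      have : (∑ u, wm u * simplify p' u) + (∑ u, wp u * simplify p' u)
          = (∑ x ∈ S, simplify p' x)
            + ∑ y, e y * (simplify p' y / (deg (doubleCover G) y : ℝ)) := by
        rw [← Finset.sum_add_distrib, Finset.sum_congr rfl fun u _ => expand u,
          Finset.sum_add_distrib, sum_indicator_mul]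
      linarith
    rw [lhs_eq, rhs_eq]
  have hD1 := le_lsCurve (doubleCover G) hpnn hwmb hwmdeg
  have hD2 := le_lsCurve (doubleCover G) hpnn hwpb hwpdeg
  -- Combine everything
  have m1 := mul_le_mul_of_nonneg_left (add_le_add hCs hCr) hα0.le
  have stepD : ∑ x ∈ S, lazyWalk (doubleCover G) (simplify p') x
      ≤ (1/2) * (lsCurve (doubleCover G) (simplify p')
            ((vol (doubleCover G) S : ℝ) - (cutEdges (doubleCover G) S Sᶜ : ℝ))
          + lsCurve (doubleCover G) (simplify p')
            ((vol (doubleCover G) S : ℝ) + (cutEdges (doubleCover G) S Sᶜ : ℝ))) := by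
    rw [hhalf]
    linarith
  have m2 := mul_le_mul_of_nonneg_left stepD (by linarith : (0:ℝ) ≤ 1 - α)
  nlinarith [stepA, stepB, m1, m2]


end Paper
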